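/- For natural numbers X, Y, S with Y ≥ X, Ξ(X,Y,S) = Σ_{i=0}^{m} (−1)^i · C(X,2i) · (2i−1)!! · C(Y+2S−2i, Y) · (2S−2i−1)!!, where m = min(⌊X/2⌋, S), Ξ as above, and (−1)!! = 1. -/

import Mathlib

/-- The heights attained immediately after each up-step of a trajectory
(listed in order of occurrence): `e(Δ,1), …, e(Δ,S)`. -/
def upsList (L : List ℕ) : List ℕ :=
  ((L.zip L.tail).filter (fun p => p.2 == p.1 + 1)).map Prod.snd

/-- `L` is a ±1-step trajectory (of nonnegative integers) from `Y` to `X`. -/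
def IsTraj (Y X : ℕ) (L : List ℕ) : Prop :=
  L.head? = some Y ∧ L.getLast? = some X ∧
    L.Chain' (fun a b => b = a + 1 ∨ a = b + 1)

/-- `Ω(X,Y,S)`: nonnegative ±1-step trajectories from `Y` to `X` with exactly `S` up-steps. -/
def Omega (X Y S : ℕ) : Set (List ℕ) :=
  {L | IsTraj Y X L ∧ (upsList L).length = S}

/-- `Ξ(X,Y,S) = Σ_{Δ ∈ Ω(X,Y,S)} ∏_{j=1}^{S} e(Δ,j)`. -/
noncomputable def XiZ (X Y S : ℕ) : ℤ :=
  ∑ᶠ L ∈ Omega X Y S, ((upsList L).prod : ℤ)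

lemma upsList_cons_cons (a b : ℕ) (t : List ℕ) :
    upsList (a :: b :: t) =
      if b = a + 1 then b :: upsList (b :: t) else upsList (b :: t) := by
  simp only [upsList, List.tail_cons, List.zip_cons_cons, List.filter_cons]
  by_cases h : b = a + 1
  · simp [h]
  · simp [h]

lemma omega_decomp (X Y S : ℕ) :
    Omega X Y S =
      (if X = Y ∧ S = 0 then {[Y]} else (∅ : Set (List ℕ))) ∪
      ((Y :: ·) '' (if 1 ≤ S then Omega X (Y + 1) (S - 1) else ∅)) ∪
      ((Y :: ·) '' (if 1 ≤ Y then Omega X (Y - 1) S else ∅)) := by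
  ext L
  constructor
  · rintro ⟨⟨hh, hl, hc⟩, hu⟩
    cases L with
    | nil => simp at hh
    | cons a M =>
      have ha : a = Y := by simpa using hh
      subst ha
      cases M with
      | nil =>
        left; left
        have hX : X = a := by simpa using hl.symm
        have hS : S = 0 := by simpa [upsList] using hu.symm
        simp [hX, hS]
      | cons b t =>
        rw [show List.Chain' _ (a :: b :: t) ↔ _ from List.isChain_cons_cons] at hc
        rcases hc.1 with h1 | h1
        · -- up step
          subst h1
          left; right
          have hS : 1 ≤ S := by
            rw [upsList_cons_cons, if_pos rfl] at hu
            simp at hu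
            omega
          refine ⟨(a+1) :: t, ?_, rfl⟩
          rw [if_pos hS]
          refine ⟨⟨rfl, by simpa using hl, hc.2⟩, ?_⟩
          rw [upsList_cons_cons, if_pos rfl] at hu
          simp only [List.length_cons] at hu
          omega
        · -- down step
          right
          have hY : 1 ≤ a := by omega
          refine ⟨b :: t, ?_, rfl⟩
          rw [if_pos hY]
          have hb : b = a - 1 := by omega
          refine ⟨⟨by simp [hb], by simpa using hl, hc.2⟩, ?_⟩
          rw [upsList_cons_cons, if_neg (by omega)] at hu
          exact hu
  · rintro ((h | ⟨M, hM, rfl⟩) | ⟨M, hM, rfl⟩)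
    · by_cases hc : X = Y ∧ S = 0
      · rw [if_pos hc] at h
        rcases hc with ⟨rfl, rfl⟩
        rcases h with rfl
        exact ⟨⟨rfl, rfl, List.isChain_singleton _⟩, rfl⟩
      · rw [if_neg hc] at h; exact absurd h (Set.notMem_empty _)
    · by_cases hS : 1 ≤ S
      · rw [if_pos hS] at hM
        obtain ⟨⟨hh, hl, hc⟩, hu⟩ := hM
        cases M with
        | nil => simp at hh
        | cons b t =>
          have hb : b = Y + 1 := by simpa using hh
          subst hb
          refine ⟨⟨rfl, by simpa using hl, List.isChain_cons_cons.2 ⟨Or.inl rfl, hc⟩⟩, ?_⟩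
          rw [upsList_cons_cons, if_pos rfl]
          simp only [List.length_cons, hu]
          omega
      · rw [if_neg hS] at hM; exact absurd hM (Set.notMem_empty _)
    · by_cases hY : 1 ≤ Y
      · rw [if_pos hY] at hM
        obtain ⟨⟨hh, hl, hc⟩, hu⟩ := hM
        cases M with
        | nil => simp at hh
        | cons b t =>
          have hb : b = Y - 1 := by simpa using hh
          subst hb
          refine ⟨⟨rfl, by simpa using hl, List.isChain_cons_cons.2 ⟨Or.inr (by omega), hc⟩⟩, ?_⟩
          rw [upsList_cons_cons, if_neg (by omega)]
          exact hu
      · rw [if_neg hY] at hM; exact absurd hM (Set.notMem_empty _)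

lemma omega_head (X Y S : ℕ) {M : List ℕ} (hM : M ∈ Omega X Y S) :
    ∃ t, M = Y :: t := by
  obtain ⟨⟨hh, -, -⟩, -⟩ := hM
  cases M with
  | nil => simp at hh
  | cons b t => exact ⟨t, by simpa using hh⟩

lemma omega_finite (X : ℕ) : ∀ n Y S, 2 * S + Y ≤ n → (Omega X Y S).Finite := by
  intro n
  induction n with
  | zero =>
    intro Y S h
    have hY : Y = 0 := by omega
    have hS : S = 0 := by omega
    subst hY; subst hS
    rw [omega_decomp]
    refine (Set.Finite.union (Set.Finite.union ?_ ?_) ?_)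
    · split <;> simp
    · simp
    · simp
  | succ n ih =>
    intro Y S h
    rw [omega_decomp]
    refine (Set.Finite.union (Set.Finite.union ?_ ?_) ?_)
    · split <;> simp
    · refine Set.Finite.image _ ?_
      split
      · exact ih (Y + 1) (S - 1) (by omega)
      · simp
    · refine Set.Finite.image _ ?_
      split
      · exact ih (Y - 1) S (by omega)
      · simp

lemma omega_finite' (X Y S : ℕ) : (Omega X Y S).Finite :=
  omega_finite X (2 * S + Y) Y S le_rfl

lemma XiZ_rec (X Y S : ℕ) :
    XiZ X Y S = (if X = Y ∧ S = 0 then 1 else 0)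
      + (if 1 ≤ S then (Y + 1 : ℤ) * XiZ X (Y + 1) (S - 1) else 0)
      + (if 1 ≤ Y then XiZ X (Y - 1) S else 0) := by
  classical
  have hinj : Function.Injective (fun M : List ℕ => Y :: M) := by
    intro a b hab; simpa using hab
  set w : List ℕ → ℤ := fun L => ((upsList L).prod : ℤ) with hw
  set A : Set (List ℕ) := if X = Y ∧ S = 0 then {[Y]} else ∅ with hA
  set B : Set (List ℕ) := (Y :: ·) '' (if 1 ≤ S then Omega X (Y + 1) (S - 1) else ∅) with hB
  set C : Set (List ℕ) := (Y :: ·) '' (if 1 ≤ Y then Omega X (Y - 1) S else ∅) with hC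
  have finA : A.Finite := by rw [hA]; split <;> simp
  have finB : B.Finite := by
    rw [hB]; refine Set.Finite.image _ ?_; split
    · exact omega_finite' _ _ _
    · simp
  have finC : C.Finite := by
    rw [hC]; refine Set.Finite.image _ ?_; split
    · exact omega_finite' _ _ _
    · simp
  have hAmem : ∀ L ∈ A, L = [Y] := by
    intro L hL; rw [hA] at hL; split at hL
    · simpa using hL
    · simp at hL
  have disjAB : Disjoint A B := by
    rw [Set.disjoint_left]
    intro L hL hLB
    have h1 := hAmem L hL
    rw [hB] at hLB
    obtain ⟨M, hM, rfl⟩ := hLB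
    split at hM
    · obtain ⟨t, rfl⟩ := omega_head _ _ _ hM
      simp at h1
    · simp at hM
  have disjAC : Disjoint A C := by
    rw [Set.disjoint_left]
    intro L hL hLB
    have h1 := hAmem L hL
    rw [hC] at hLB
    obtain ⟨M, hM, rfl⟩ := hLB
    split at hM
    · obtain ⟨t, rfl⟩ := omega_head _ _ _ hM
      simp at h1
    · simp at hM
  have disjBC : Disjoint B C := by
    rw [Set.disjoint_left]
    intro L hLB hLC
    rw [hB] at hLB; rw [hC] at hLC
    obtain ⟨M, hM, rfl⟩ := hLB
    obtain ⟨M', hM', hE⟩ := hLC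
    split at hM
    ·
      split at hM'
      · obtain ⟨t, rfl⟩ := omega_head _ _ _ hM
        obtain ⟨t', rfl⟩ := omega_head _ _ _ hM'
        simp only [List.cons.injEq] at hE
        omega
      · simp at hM'
    · simp at hM
  have hsum : XiZ X Y S = (∑ᶠ L ∈ A, w L) + (∑ᶠ L ∈ B, w L) + (∑ᶠ L ∈ C, w L) := by
    rw [XiZ, omega_decomp, ← hA, ← hB, ← hC]
    rw [finsum_mem_union (by exact Set.disjoint_union_left.2 ⟨disjAC, disjBC⟩)
        (finA.union finB) finC,
      finsum_mem_union disjAB finA finB]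
  rw [hsum]
  congr 1
  · congr 1
    · rw [hA]; split
      · rw [finsum_mem_singleton]
        show ((upsList [Y]).prod : ℤ) = 1
        rfl
      · exact finsum_mem_empty
    · rw [hB]; split
      · rename_i hS
        rw [finsum_mem_image (Set.injOn_of_injective hinj)]
        rw [finsum_mem_eq_finite_toFinset_sum _ (omega_finite' X (Y+1) (S-1))]
        rw [XiZ, finsum_mem_eq_finite_toFinset_sum _ (omega_finite' X (Y+1) (S-1)), Finset.mul_sum]
        refine Finset.sum_congr rfl ?_
        intro M hM
        rw [Set.Finite.mem_toFinset] at hM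
        obtain ⟨t, rfl⟩ := omega_head _ _ _ hM
        show ((upsList (Y :: (Y+1) :: t)).prod : ℤ) = _
        rw [upsList_cons_cons, if_pos rfl]
        push_cast [List.prod_cons]
        ring
      · rw [Set.image_empty]; exact finsum_mem_empty
  · rw [hC]; split
    · rename_i hY
      rw [finsum_mem_image (Set.injOn_of_injective hinj), XiZ]
      refine finsum_mem_congr rfl ?_
      intro M hM
      obtain ⟨t, rfl⟩ := omega_head _ _ _ hM
      show ((upsList (Y :: (Y-1) :: t)).prod : ℤ) = _
      rw [upsList_cons_cons, if_neg (by omega)]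
    · rw [Set.image_empty]; exact finsum_mem_empty
lemma XiZ_vanish : ∀ n X Y S, 2 * S + Y ≤ n → Y + S < X → XiZ X Y S = 0 := by
  intro n
  induction n with
  | zero =>
    intro X Y S h hx
    have hY : Y = 0 := by omega
    have hS : S = 0 := by omega
    subst hY; subst hS
    rw [XiZ_rec]
    simp
    omega
  | succ n ih =>
    intro X Y S h hx
    rw [XiZ_rec]
    rw [if_neg (by omega)]
    have h2 : (if 1 ≤ S then (Y + 1 : ℤ) * XiZ X (Y + 1) (S - 1) else 0) = 0 := by
      split
      · rw [ih X (Y+1) (S-1) (by omega) (by omega)]; ring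
      · rfl
    have h3 : (if 1 ≤ Y then XiZ X (Y - 1) S else 0) = 0 := by
      split
      · exact ih X (Y-1) S (by omega) (by omega)
      · rfl
    rw [h2, h3]; ring

/-! Arithmetic lemmas -/

lemma df_odd (t : ℕ) :
    Nat.doubleFactorial (2 * t + 1) = (2 * t + 1) * Nat.doubleFactorial (2 * t - 1) := by
  cases t with
  | zero => rfl
  | succ t =>
    have h : 2 * (t + 1) + 1 = (2 * t + 1) + 2 := by ring
    rw [h, Nat.doubleFactorial_add_two]
    congr 2 <;> omega

lemma df_mul_df (m : ℕ) :
    Nat.doubleFactorial m * Nat.doubleFactorial (m - 1) = Nat.factorial m := by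
  cases m with
  | zero => rfl
  | succ m => simpa using (Nat.factorial_eq_mul_doubleFactorial m).symm

def fN (Y T : ℕ) : ℕ := Nat.choose (Y + 2 * T) Y * Nat.doubleFactorial (2 * T - 1)

lemma F1 (Y t : ℕ) : fN (Y + 1) (t + 1) = (Y + 2) * fN (Y + 2) t + fN Y (t + 1) := by
  unfold fN
  have e1 : Y + 1 + 2 * (t + 1) = (Y + 2 * t + 2) + 1 := by ring
  have e2 : Y + 2 + 2 * t = Y + 2 * t + 2 := by ring
  have e3 : Y + 2 * (t + 1) = Y + 2 * t + 2 := by ring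
  have e4 : 2 * (t + 1) - 1 = 2 * t + 1 := by omega
  rw [e1, e2, e3, e4]
  set n := Y + 2 * t + 2 with hn
  have key : Nat.choose n (Y + 1) * Nat.doubleFactorial (2 * t + 1)
      = (Y + 2) * (Nat.choose n (Y + 2) * Nat.doubleFactorial (2 * t - 1)) := by
    have h := Nat.choose_succ_right_eq n (Y + 1)
    have hsub : n - (Y + 1) = 2 * t + 1 := by omega
    rw [hsub] at h
    rw [df_odd]
    have h2 : (Y + 2) * (Nat.choose n (Y + 2) * Nat.doubleFactorial (2 * t - 1))
        = (Nat.choose n (Y + 1 + 1) * (Y + 1 + 1)) * Nat.doubleFactorial (2 * t - 1) := by ring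
    rw [h2, h]
    ring
  rw [Nat.choose_succ_succ, add_mul, key]
  ring

lemma F2 (t : ℕ) : fN 0 (t + 1) = fN 1 t := by
  unfold fN
  have e1 : 0 + 2 * (t + 1) = 2 * t + 2 := by ring
  have e2 : 2 * (t + 1) - 1 = 2 * t + 1 := by omega
  have e3 : 1 + 2 * t = 2 * t + 1 := by ring
  rw [e1, e2, e3, Nat.choose_zero_right, df_odd, Nat.choose_one_right]
  ring
lemma choose_choose (Y S i : ℕ) (hi : i ≤ S) :
    Nat.choose (Y + 2 * S) (2 * i) * Nat.choose (Y + 2 * S - 2 * i) Y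
      = Nat.choose (Y + 2 * S) Y * Nat.choose (2 * S) (2 * i) := by
  have a1 := Nat.choose_mul_factorial_mul_factorial (show 2 * i ≤ Y + 2 * S by omega)
  have a2 := Nat.choose_mul_factorial_mul_factorial (show Y ≤ Y + 2 * S - 2 * i by omega)
  have a3 := Nat.choose_mul_factorial_mul_factorial (show Y ≤ Y + 2 * S by omega)
  have a4 := Nat.choose_mul_factorial_mul_factorial (show 2 * i ≤ 2 * S by omega)
  rw [show Y + 2 * S - 2 * i - Y = 2 * S - 2 * i by omega] at a2
  rw [show Y + 2 * S - Y = 2 * S by omega] at a3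
  refine Nat.eq_of_mul_eq_mul_right
    (show 0 < Nat.factorial (2 * i) * Nat.factorial Y * Nat.factorial (2 * S - 2 * i) by positivity) ?_
  calc Nat.choose (Y + 2 * S) (2 * i) * Nat.choose (Y + 2 * S - 2 * i) Y
        * (Nat.factorial (2 * i) * Nat.factorial Y * Nat.factorial (2 * S - 2 * i))
      = (Nat.choose (Y + 2 * S - 2 * i) Y * Nat.factorial Y * Nat.factorial (2 * S - 2 * i))
        * (Nat.choose (Y + 2 * S) (2 * i) * Nat.factorial (2 * i)) := by ring
    _ = Nat.choose (Y + 2 * S) (2 * i) * Nat.factorial (2 * i)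
          * Nat.factorial (Y + 2 * S - 2 * i) := by rw [a2]; ring
    _ = Nat.factorial (Y + 2 * S) := a1
    _ = Nat.choose (Y + 2 * S) Y * Nat.factorial Y * Nat.factorial (2 * S) := a3.symm
    _ = (Nat.choose (2 * S) (2 * i) * Nat.factorial (2 * i) * Nat.factorial (2 * S - 2 * i))
          * (Nat.choose (Y + 2 * S) Y * Nat.factorial Y) := by rw [a4]; ring
    _ = Nat.choose (Y + 2 * S) Y * Nat.choose (2 * S) (2 * i)
        * (Nat.factorial (2 * i) * Nat.factorial Y * Nat.factorial (2 * S - 2 * i)) := by ring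

lemma G_id (S i : ℕ) (hi : i ≤ S) :
    Nat.choose (2 * S) (2 * i) * Nat.doubleFactorial (2 * i - 1)
        * Nat.doubleFactorial (2 * S - 2 * i - 1)
      = Nat.choose S i * Nat.doubleFactorial (2 * S - 1) := by
  have a4 := Nat.choose_mul_factorial_mul_factorial (show 2 * i ≤ 2 * S by omega)
  have a5 := Nat.choose_mul_factorial_mul_factorial (show i ≤ S from hi)
  have d1 := df_mul_df (2 * i)
  have d2 := df_mul_df (2 * (S - i))
  have d3 := df_mul_df (2 * S)
  have p1 := Nat.doubleFactorial_two_mul i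
  have p2 := Nat.doubleFactorial_two_mul (S - i)
  have p3 := Nat.doubleFactorial_two_mul S
  rw [show 2 * (S - i) = 2 * S - 2 * i by omega] at d2 p2
  rw [show 2 * S - 2 * i - 1 = 2 * S - 2 * i - 1 by rfl] at d2
  refine Nat.eq_of_mul_eq_mul_right
    (show 0 < Nat.doubleFactorial (2 * i) * Nat.doubleFactorial (2 * S - 2 * i) by positivity) ?_
  have pow_split : (2 : ℕ) ^ i * 2 ^ (S - i) = 2 ^ S := by
    rw [← pow_add]; congr 1; omega
  calc Nat.choose (2 * S) (2 * i) * Nat.doubleFactorial (2 * i - 1)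
        * Nat.doubleFactorial (2 * S - 2 * i - 1)
        * (Nat.doubleFactorial (2 * i) * Nat.doubleFactorial (2 * S - 2 * i))
      = Nat.choose (2 * S) (2 * i)
          * (Nat.doubleFactorial (2 * i) * Nat.doubleFactorial (2 * i - 1))
          * (Nat.doubleFactorial (2 * S - 2 * i) * Nat.doubleFactorial (2 * S - 2 * i - 1)) := by
        ring
    _ = Nat.choose (2 * S) (2 * i) * Nat.factorial (2 * i) * Nat.factorial (2 * S - 2 * i) := by
        rw [d1, d2]
    _ = Nat.factorial (2 * S) := a4
    _ = Nat.doubleFactorial (2 * S) * Nat.doubleFactorial (2 * S - 1) := (df_mul_df (2 * S)).symm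
    _ = 2 ^ S * Nat.factorial S * Nat.doubleFactorial (2 * S - 1) := by rw [p3]
    _ = 2 ^ S * (Nat.choose S i * Nat.factorial i * Nat.factorial (S - i))
          * Nat.doubleFactorial (2 * S - 1) := by rw [a5]
    _ = Nat.choose S i * Nat.doubleFactorial (2 * S - 1)
          * ((2 ^ i * Nat.factorial i) * (2 ^ (S - i) * Nat.factorial (S - i))) := by
        rw [← pow_split]; ring
    _ = Nat.choose S i * Nat.doubleFactorial (2 * S - 1)
        * (Nat.doubleFactorial (2 * i) * Nat.doubleFactorial (2 * S - 2 * i)) := by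
        rw [p1, p2]
noncomputable def rhsZ (X Y S : ℕ) : ℤ :=
  ∑ i ∈ Finset.range (min (X / 2) S + 1),
    (-1 : ℤ) ^ i * (Nat.choose X (2 * i) : ℤ) *
      (Nat.doubleFactorial (2 * i - 1) : ℤ) *
      ((Nat.choose (Y + 2 * S - 2 * i) Y : ℤ) *
        (Nat.doubleFactorial (2 * S - 2 * i - 1) : ℤ))

lemma rhsZ_base (X Y : ℕ) : rhsZ X Y 0 = 1 := by
  rw [rhsZ]
  rw [show min (X / 2) 0 = 0 from Nat.min_zero _]
  simp

lemma rhsZ_vanish_top (Y S : ℕ) (hS : 1 ≤ S) : rhsZ (Y + 2 * S) Y S = 0 := by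
  rw [rhsZ]
  rw [show min ((Y + 2 * S) / 2) S = S by omega]
  have hterm : ∀ i ∈ Finset.range (S + 1),
      (-1 : ℤ) ^ i * (Nat.choose (Y + 2 * S) (2 * i) : ℤ) *
        (Nat.doubleFactorial (2 * i - 1) : ℤ) *
        ((Nat.choose (Y + 2 * S - 2 * i) Y : ℤ) *
          (Nat.doubleFactorial (2 * S - 2 * i - 1) : ℤ))
      = ((Nat.choose (Y + 2 * S) Y * Nat.doubleFactorial (2 * S - 1) : ℕ) : ℤ)
          * ((-1 : ℤ) ^ i * (Nat.choose S i : ℤ)) := by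
    intro i hi
    rw [Finset.mem_range] at hi
    have hi' : i ≤ S := by omega
    have key : Nat.choose (Y + 2 * S) (2 * i) * Nat.doubleFactorial (2 * i - 1) *
        (Nat.choose (Y + 2 * S - 2 * i) Y * Nat.doubleFactorial (2 * S - 2 * i - 1))
        = Nat.choose (Y + 2 * S) Y * Nat.doubleFactorial (2 * S - 1) * Nat.choose S i := by
      calc Nat.choose (Y + 2 * S) (2 * i) * Nat.doubleFactorial (2 * i - 1) *
            (Nat.choose (Y + 2 * S - 2 * i) Y * Nat.doubleFactorial (2 * S - 2 * i - 1))
          = (Nat.choose (Y + 2 * S) (2 * i) * Nat.choose (Y + 2 * S - 2 * i) Y)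
              * (Nat.doubleFactorial (2 * i - 1) * Nat.doubleFactorial (2 * S - 2 * i - 1)) := by
            ring
        _ = (Nat.choose (Y + 2 * S) Y) * (Nat.choose (2 * S) (2 * i)
              * Nat.doubleFactorial (2 * i - 1) * Nat.doubleFactorial (2 * S - 2 * i - 1)) := by
            rw [choose_choose Y S i hi']; ring
        _ = Nat.choose (Y + 2 * S) Y * Nat.doubleFactorial (2 * S - 1) * Nat.choose S i := by
            rw [G_id S i hi']; ring
    calc (-1 : ℤ) ^ i * (Nat.choose (Y + 2 * S) (2 * i) : ℤ) *
          (Nat.doubleFactorial (2 * i - 1) : ℤ) *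
          ((Nat.choose (Y + 2 * S - 2 * i) Y : ℤ) *
            (Nat.doubleFactorial (2 * S - 2 * i - 1) : ℤ))
        = ((Nat.choose (Y + 2 * S) (2 * i) * Nat.doubleFactorial (2 * i - 1) *
            (Nat.choose (Y + 2 * S - 2 * i) Y * Nat.doubleFactorial (2 * S - 2 * i - 1)) : ℕ) : ℤ)
            * (-1 : ℤ) ^ i := by push_cast; ring
      _ = _ := by rw [key]; push_cast; ring
  rw [Finset.sum_congr rfl hterm, ← Finset.mul_sum, Int.alternating_sum_range_choose,
    if_neg (by omega)]
  ring

lemma rhsZ_rec (X Y S : ℕ) :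
    rhsZ X (Y + 1) (S + 1)
      = ((Y : ℤ) + 2) * rhsZ X (Y + 2) S + rhsZ X Y (S + 1) := by
  by_cases h : X / 2 ≤ S
  · have m1 : min (X / 2) (S + 1) = X / 2 := by omega
    have m2 : min (X / 2) S = X / 2 := by omega
    rw [rhsZ, rhsZ, rhsZ, m1, m2, Finset.mul_sum, ← Finset.sum_add_distrib]
    refine Finset.sum_congr rfl ?_
    intro i hi
    rw [Finset.mem_range] at hi
    have hiS : i ≤ S := by omega
    -- rewrite all index arithmetic in terms of T := S - i
    have e1 : Y + 1 + 2 * (S + 1) - 2 * i = (Y + 1) + 2 * ((S - i) + 1) := by omega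
    have e2 : 2 * (S + 1) - 2 * i - 1 = 2 * ((S - i) + 1) - 1 := by omega
    have e3 : Y + 2 + 2 * S - 2 * i = (Y + 2) + 2 * (S - i) := by omega
    have e4 : 2 * S - 2 * i - 1 = 2 * (S - i) - 1 := by omega
    have e5 : Y + 2 * (S + 1) - 2 * i = Y + 2 * ((S - i) + 1) := by omega
    rw [e1, e2, e3, e4, e5]
    have hf := F1 Y (S - i)
    unfold fN at hf
    have hfz : ((Nat.choose (Y + 1 + 2 * ((S - i) + 1)) (Y + 1)
          * Nat.doubleFactorial (2 * ((S - i) + 1) - 1) : ℕ) : ℤ)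
        = ((Y : ℤ) + 2) * ((Nat.choose (Y + 2 + 2 * (S - i)) (Y + 2)
            * Nat.doubleFactorial (2 * (S - i) - 1) : ℕ) : ℤ)
          + ((Nat.choose (Y + 2 * ((S - i) + 1)) Y
            * Nat.doubleFactorial (2 * ((S - i) + 1) - 1) : ℕ) : ℤ) := by
      exact_mod_cast congrArg (fun n : ℕ => (n : ℤ)) hf
    push_cast at hfz ⊢
    linear_combination ((-1 : ℤ) ^ i * (Nat.choose X (2 * i) : ℤ)
      * (Nat.doubleFactorial (2 * i - 1) : ℤ)) * hfz
  · -- X / 2 ≥ S + 1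
    have m1 : min (X / 2) (S + 1) = S + 1 := by omega
    have m2 : min (X / 2) S = S := by omega
    rw [rhsZ, rhsZ, rhsZ, m1, m2, Finset.sum_range_succ (n := S + 1),
      Finset.sum_range_succ (n := S + 1), Finset.mul_sum]
    have last_eq :
        (-1 : ℤ) ^ (S + 1) * (Nat.choose X (2 * (S + 1)) : ℤ) *
          (Nat.doubleFactorial (2 * (S + 1) - 1) : ℤ) *
          ((Nat.choose (Y + 1 + 2 * (S + 1) - 2 * (S + 1)) (Y + 1) : ℤ) *
            (Nat.doubleFactorial (2 * (S + 1) - 2 * (S + 1) - 1) : ℤ))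
        = (-1 : ℤ) ^ (S + 1) * (Nat.choose X (2 * (S + 1)) : ℤ) *
          (Nat.doubleFactorial (2 * (S + 1) - 1) : ℤ) *
          ((Nat.choose (Y + 2 * (S + 1) - 2 * (S + 1)) Y : ℤ) *
            (Nat.doubleFactorial (2 * (S + 1) - 2 * (S + 1) - 1) : ℤ)) := by
      rw [show Y + 1 + 2 * (S + 1) - 2 * (S + 1) = Y + 1 by omega,
        show Y + 2 * (S + 1) - 2 * (S + 1) = Y by omega]
      simp
    have hA : ∑ i ∈ Finset.range (S + 1),
          (-1 : ℤ) ^ i * (Nat.choose X (2 * i) : ℤ) *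
            (Nat.doubleFactorial (2 * i - 1) : ℤ) *
            ((Nat.choose (Y + 1 + 2 * (S + 1) - 2 * i) (Y + 1) : ℤ) *
              (Nat.doubleFactorial (2 * (S + 1) - 2 * i - 1) : ℤ))
        = ∑ i ∈ Finset.range (S + 1),
            (((Y : ℤ) + 2) * ((-1 : ℤ) ^ i * (Nat.choose X (2 * i) : ℤ) *
              (Nat.doubleFactorial (2 * i - 1) : ℤ) *
              ((Nat.choose (Y + 2 + 2 * S - 2 * i) (Y + 2) : ℤ) *
                (Nat.doubleFactorial (2 * S - 2 * i - 1) : ℤ)))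
            + (-1 : ℤ) ^ i * (Nat.choose X (2 * i) : ℤ) *
              (Nat.doubleFactorial (2 * i - 1) : ℤ) *
              ((Nat.choose (Y + 2 * (S + 1) - 2 * i) Y : ℤ) *
                (Nat.doubleFactorial (2 * (S + 1) - 2 * i - 1) : ℤ))) := by
      refine Finset.sum_congr rfl ?_
      intro i hi
      rw [Finset.mem_range] at hi
      have hiS : i ≤ S := by omega
      have e1 : Y + 1 + 2 * (S + 1) - 2 * i = (Y + 1) + 2 * ((S - i) + 1) := by omega
      have e2 : 2 * (S + 1) - 2 * i - 1 = 2 * ((S - i) + 1) - 1 := by omega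
      have e3 : Y + 2 + 2 * S - 2 * i = (Y + 2) + 2 * (S - i) := by omega
      have e4 : 2 * S - 2 * i - 1 = 2 * (S - i) - 1 := by omega
      have e5 : Y + 2 * (S + 1) - 2 * i = Y + 2 * ((S - i) + 1) := by omega
      rw [e1, e2, e3, e4, e5]
      have hf := F1 Y (S - i)
      unfold fN at hf
      have hfz : ((Nat.choose (Y + 1 + 2 * ((S - i) + 1)) (Y + 1)
            * Nat.doubleFactorial (2 * ((S - i) + 1) - 1) : ℕ) : ℤ)
          = ((Y : ℤ) + 2) * ((Nat.choose (Y + 2 + 2 * (S - i)) (Y + 2)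
              * Nat.doubleFactorial (2 * (S - i) - 1) : ℕ) : ℤ)
            + ((Nat.choose (Y + 2 * ((S - i) + 1)) Y
              * Nat.doubleFactorial (2 * ((S - i) + 1) - 1) : ℕ) : ℤ) := by
        exact_mod_cast congrArg (fun n : ℕ => (n : ℤ)) hf
      push_cast at hfz ⊢
      linear_combination ((-1 : ℤ) ^ i * (Nat.choose X (2 * i) : ℤ)
        * (Nat.doubleFactorial (2 * i - 1) : ℤ)) * hfz
    rw [last_eq, hA, Finset.sum_add_distrib]
    ring

lemma rhsZ_rec0 (X S : ℕ) (hX : X ≤ 2 * S + 1) :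
    rhsZ X 0 (S + 1) = rhsZ X 1 S := by
  have h : X / 2 ≤ S := by omega
  have m1 : min (X / 2) (S + 1) = X / 2 := by omega
  have m2 : min (X / 2) S = X / 2 := by omega
  rw [rhsZ, rhsZ, m1, m2]
  refine Finset.sum_congr rfl ?_
  intro i hi
  rw [Finset.mem_range] at hi
  have hiS : i ≤ S := by omega
  have e1 : 0 + 2 * (S + 1) - 2 * i = 0 + 2 * ((S - i) + 1) := by omega
  have e2 : 2 * (S + 1) - 2 * i - 1 = 2 * ((S - i) + 1) - 1 := by omega
  have e3 : 1 + 2 * S - 2 * i = 1 + 2 * (S - i) := by omega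
  have e4 : 2 * S - 2 * i - 1 = 2 * (S - i) - 1 := by omega
  rw [e1, e2, e3, e4]
  have hf := F2 (S - i)
  unfold fN at hf
  have hfz : ((Nat.choose (0 + 2 * ((S - i) + 1)) 0
        * Nat.doubleFactorial (2 * ((S - i) + 1) - 1) : ℕ) : ℤ)
      = ((Nat.choose (1 + 2 * (S - i)) 1 * Nat.doubleFactorial (2 * (S - i) - 1) : ℕ) : ℤ) := by
    exact_mod_cast congrArg (fun n : ℕ => (n : ℤ)) hf
  push_cast at hfz ⊢
  linear_combination ((-1 : ℤ) ^ i * (Nat.choose X (2 * i) : ℤ)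
    * (Nat.doubleFactorial (2 * i - 1) : ℤ)) * hfz
lemma main_aux : ∀ n X Y S, 2 * S + Y ≤ n → X ≤ Y + 2 * S → XiZ X Y S = rhsZ X Y S := by
  intro n
  induction n with
  | zero =>
    intro X Y S h hX
    have hY : Y = 0 := by omega
    have hS : S = 0 := by omega
    have hXx : X = 0 := by omega
    subst hY; subst hS; subst hXx
    rw [XiZ_rec, rhsZ_base]
    norm_num
  | succ n ih =>
    intro X Y S h hX
    cases S with
    | zero =>
      rw [rhsZ_base]
      rw [XiZ_rec]
      have h2 : (if 1 ≤ 0 then (Y + 1 : ℤ) * XiZ X (Y + 1) (0 - 1) else 0) = 0 := by norm_num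
      rw [h2]
      by_cases hxy : X = Y
      · rw [if_pos ⟨hxy, rfl⟩]
        have h3 : (if 1 ≤ Y then XiZ X (Y - 1) 0 else 0) = 0 := by
          split
          · exact XiZ_vanish (2 * 0 + (Y - 1)) X (Y - 1) 0 le_rfl (by omega)
          · rfl
        rw [h3]; ring
      · have hY : 1 ≤ Y := by omega
        rw [if_neg (by tauto), if_pos hY]
        have h3 : XiZ X (Y - 1) 0 = rhsZ X (Y - 1) 0 :=
          ih X (Y - 1) 0 (by omega) (by omega)
        rw [h3, rhsZ_base]; ring
    | succ T =>
      by_cases htop : X = Y + 2 * (T + 1)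
      · subst htop
        rw [XiZ_vanish (2 * (T + 1) + Y) _ Y (T + 1) le_rfl (by omega),
          rhsZ_vanish_top Y (T + 1) (by omega)]
      · have hX' : X ≤ Y + 2 * T + 1 := by omega
        rw [XiZ_rec]
        rw [if_neg (by omega)]
        rw [if_pos (by omega : 1 ≤ T + 1)]
        have hup : XiZ X (Y + 1) (T + 1 - 1) = rhsZ X (Y + 1) T := by
          rw [show T + 1 - 1 = T by omega]
          exact ih X (Y + 1) T (by omega) (by omega)
        rw [hup]
        cases Y with
        | zero =>
          rw [if_neg (by omega)]
          rw [rhsZ_rec0 X T (by omega)]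
          push_cast
          ring
        | succ Z =>
          rw [if_pos (by omega : 1 ≤ Z + 1)]
          have hdown : XiZ X (Z + 1 - 1) (T + 1) = rhsZ X Z (T + 1) := by
            rw [show Z + 1 - 1 = Z by omega]
            exact ih X Z (T + 1) (by omega) (by omega)
          rw [hdown, rhsZ_rec X Z T]
          push_cast
          ring

theorem stmt16 (X Y S : ℕ) (hXY : X ≤ Y) :
    XiZ X Y S =
      ∑ i ∈ Finset.range (min (X / 2) S + 1),
        (-1 : ℤ) ^ i * (Nat.choose X (2 * i) : ℤ) *
          (Nat.doubleFactorial (2 * i - 1) : ℤ) *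
          ((Nat.choose (Y + 2 * S - 2 * i) Y : ℤ) *
            (Nat.doubleFactorial (2 * S - 2 * i - 1) : ℤ)) := by
  rw [main_aux (2 * S + Y) X Y S le_rfl (by omega), rhsZ]
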